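/- Let (G, ℓ) be a labelled connected graph all of whose edges are dotted, with vertex set V of size n and edge set D of size m, fix an orientation, and let [X_D] be the n × m incidence-type matrix whose column for an oriented edge e = (v_i, v_j) has ℓ(e) in row i, −ℓ(e) in row j, and 0 elsewhere. Let q be a positive integer with ℓ(e) | q for all e. Then the number of maps c : V → ℤ/qℤ with ℓ(e)·c(e⁺) = ℓ(e)·c(e⁻) for every edge e equals q · m(∅), where m(∅) is the cardinality of the torsion subgroup of ℤⁿ/⟨columns of [X_D]⟩. -/

import Mathlib

/-- The labelled incidence matrix `[X_D]` of an oriented labelled graph: the column of an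
edge `e = (v_i, v_j)` has `ℓ(e)` in row `v_i`, `−ℓ(e)` in row `v_j`, and `0` elsewhere. -/
def incMat {V E : Type*} [DecidableEq V] (ends : E → V × V) (ℓ : E → ℕ) :
    Matrix V E ℤ :=
  Matrix.of fun v e =>
    if (ends e).1 = v then (ℓ e : ℤ) else if (ends e).2 = v then -(ℓ e : ℤ) else 0

open Multiplicative in
lemma card_intLinearMap_zmod (q : ℕ) [NeZero q] (T : Type*) [AddCommGroup T]
    [Finite T] (hT : ∀ t : T, q • t = 0) :
    Nat.card (T →ₗ[ℤ] ZMod q) = Nat.card T := by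
  classical
  let G := Multiplicative T
  have hdvd : Monoid.exponent G ∣ q :=
    Monoid.exponent_dvd_of_forall_pow_eq_one fun g => by
      have : (g ^ q).toAdd = (0 : T) := by
        rw [toAdd_pow]; exact hT _
      simpa using this
  have hMcyc : IsCyclic (Multiplicative (ZMod q))ˣ :=
    isCyclic_of_surjective (toUnits (G := Multiplicative (ZMod q))).toMonoidHom
      (toUnits).surjective
  have hprim : IsPrimitiveRoot (ofAdd (1 : ZMod q)) q := by
    have h := IsPrimitiveRoot.orderOf (ofAdd (1 : ZMod q))
    rwa [orderOf_ofAdd_eq_addOrderOf, ZMod.addOrderOf_one] at h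
  have hM : HasEnoughRootsOfUnity (Multiplicative (ZMod q)) q :=
    { prim := ⟨ofAdd (1 : ZMod q), hprim⟩
      cyc := inferInstance }
  have : HasEnoughRootsOfUnity (Multiplicative (ZMod q)) (Monoid.exponent G) :=
    HasEnoughRootsOfUnity.of_dvd _ hdvd
  obtain ⟨e⟩ := CommGroup.monoidHom_mulEquiv_of_hasEnoughRootsOfUnity G (Multiplicative (ZMod q))
  calc Nat.card (T →ₗ[ℤ] ZMod q)
      = Nat.card (T →+ ZMod q) := Nat.card_congr (addMonoidHomLequivInt ℤ).symm.toEquiv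
    _ = Nat.card (G →* Multiplicative (ZMod q)) :=
        Nat.card_congr AddMonoidHom.toMultiplicative
    _ = Nat.card (G →* (Multiplicative (ZMod q))ˣ) :=
        Nat.card_congr (MulEquiv.monoidHomCongrRightEquiv (M := G) toUnits)
    _ = Nat.card G := Nat.card_congr e.toEquiv
    _ = Nat.card T := rfl

/-- For a labelled connected graph all of whose edges are dotted and an admissible `q`, the
number of arithmetic `q`-colorings equals `q · m(∅)`, where `m(∅)` is the cardinality of the
torsion subgroup of `ℤ^V / ⟨columns of [X_D]⟩`. -/
theorem stmt15 {V E : Type*} [Fintype V] [Fintype E] [DecidableEq V] [Nonempty V]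
    (ends : E → V × V) (hloop : ∀ e, (ends e).1 ≠ (ends e).2)
    (hconn : ∀ u v : V,
      Relation.ReflTransGen (fun a b => ∃ e, ends e = (a, b) ∨ ends e = (b, a)) u v)
    (ℓ : E → ℕ) (hℓ : ∀ e, 0 < ℓ e) (q : ℕ) (hq : 0 < q) (hadm : ∀ e, ℓ e ∣ q) :
    Nat.card {c : V → ZMod q //
        ∀ e, (ℓ e : ZMod q) * c (ends e).1 = (ℓ e : ZMod q) * c (ends e).2}
      = q * Nat.card (Submodule.torsion ℤ
          ((V → ℤ) ⧸ LinearMap.range (incMat ends ℓ).mulVecLin)) := by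
  classical
  set A := incMat ends ℓ with hA
  set R : Submodule ℤ (V → ℤ) := LinearMap.range A.mulVecLin with hRdef
  let σ : (V → ℤ) →ₗ[ℤ] ℤ :=
    { toFun := fun x => ∑ v, x v
      map_add' := fun x y => by simp [Finset.sum_add_distrib]
      map_smul' := fun c x => by simp [Finset.mul_sum] }
  have hσ_single : ∀ v : V, σ (Pi.single v (1 : ℤ)) = 1 := by
    intro v
    show (∑ w, Pi.single v (1:ℤ) w) = 1
    simp [Finset.sum_pi_single']
  have hcol : ∀ e, (fun v => A v e)
      = (ℓ e : ℤ) • (Pi.single (ends e).1 1 - Pi.single (ends e).2 1) := by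
    intro e
    funext w
    by_cases h1 : (ends e).1 = w
    · simp [hA, incMat, h1, Pi.single_apply, (h1 ▸ hloop e).symm]
    · by_cases h2 : (ends e).2 = w
      · simp [hA, incMat, h1, h2, Pi.single_apply, Ne.symm h1]
      · simp [hA, incMat, h1, h2, Pi.single_apply, Ne.symm h1, Ne.symm h2]
  have hcolR : ∀ e, (fun v => A v e) ∈ R := by
    intro e
    exact ⟨Pi.single e 1, by simp [Matrix.mulVecLin_apply]; rfl⟩
  have hadj : ∀ u w : V, (∃ e, ends e = (u, w) ∨ ends e = (w, u)) →
      (q : ℤ) • (Pi.single u (1:ℤ) - Pi.single w 1) ∈ R := by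
    rintro u w ⟨e, he⟩
    have hmem : (q : ℤ) • (Pi.single (ends e).1 (1:ℤ) - Pi.single (ends e).2 1) ∈ R := by
      have hmul : ((q / ℓ e : ℕ) : ℤ) •
            ((ℓ e : ℤ) • (Pi.single (ends e).1 (1:ℤ) - Pi.single (ends e).2 1 : V → ℤ))
          = (q : ℤ) • (Pi.single (ends e).1 (1:ℤ) - Pi.single (ends e).2 1 : V → ℤ) := by
        rw [smul_smul, ← Nat.cast_mul, Nat.div_mul_cancel (hadm e)]
      rw [← hmul, ← hcol e]
      exact Submodule.smul_mem _ _ (hcolR e)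
    rcases he with he | he
    · simpa [he] using hmem
    · have := Submodule.neg_mem _ hmem
      simp only [he] at this
      simpa [smul_sub, neg_sub] using this
  have hsingleR : ∀ u w : V, (q : ℤ) • (Pi.single u (1:ℤ) - Pi.single w 1) ∈ R := by
    intro u w
    induction hconn u w with
    | refl => simp
    | tail hstep hedge ih =>
      have h2 := hadj _ _ hedge
      have := Submodule.add_mem _ ih h2
      simpa [smul_sub, sub_add_sub_cancel] using this
  have hK : ∀ x : V → ℤ, σ x = 0 → (q : ℤ) • x ∈ R := by
    intro x hx
    obtain ⟨v₀⟩ := ‹Nonempty V›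
    have hx' : (∑ v, x v) = 0 := hx
    have hrepr : (q : ℤ) • x
        = ∑ v, x v • ((q : ℤ) • (Pi.single v (1:ℤ) - Pi.single v₀ 1)) := by
      funext w
      simp only [Pi.smul_apply, Finset.sum_apply, Pi.sub_apply, Pi.single_apply,
        smul_eq_mul, smul_sub]
      rw [Finset.sum_sub_distrib, ← Finset.sum_mul, hx', zero_mul, sub_zero]
      simp only [mul_ite, mul_one, mul_zero, Finset.sum_ite_eq, Finset.mem_univ, if_true]
      ring
    rw [hrepr]
    exact Submodule.sum_mem _ fun v _ => Submodule.smul_mem _ _ (hsingleR v v₀)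
  have hmv : ∀ x : E → ℤ, A.mulVecLin x = ∑ e, x e • (fun v => A v e) := by
    intro x
    funext w
    simp [Matrix.mulVecLin_apply, Matrix.mulVec, dotProduct, mul_comm]
  have hRK : R ≤ LinearMap.ker σ := by
    rintro y ⟨x, rfl⟩
    rw [LinearMap.mem_ker, hmv, map_sum]
    refine Finset.sum_eq_zero fun e _ => ?_
    rw [map_smul, hcol e, map_smul, map_sub, hσ_single, hσ_single]
    simp
  set N := (V → ℤ) ⧸ R with hN
  let σb : N →ₗ[ℤ] ℤ := R.liftQ σ hRK
  set T' : Submodule ℤ N := LinearMap.ker σb with hT'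
  let ξ : N := Submodule.Quotient.mk (Pi.single (Classical.arbitrary V) (1:ℤ))
  have hσξ : σb ξ = 1 := hσ_single _
  have hqN : ∀ y : N, σb y = 0 → (q : ℤ) • y = 0 := by
    intro y hy
    obtain ⟨x, rfl⟩ := Submodule.Quotient.mk_surjective R y
    have hx : σ x = 0 := hy
    rw [← Submodule.Quotient.mk_smul, Submodule.Quotient.mk_eq_zero]
    exact hK x hx
  have hqZ : (q : ℤ) ≠ 0 := by exact_mod_cast hq.ne'
  have htors : Submodule.torsion ℤ N = T' := by
    ext y
    constructor
    · rintro ⟨⟨a, ha⟩, h⟩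
      have ha' : (a : ℤ) ≠ 0 := mem_nonZeroDivisors_iff_ne_zero.mp ha
      have h2 : a * σb y = 0 := by
        rw [← smul_eq_mul, ← map_smul]
        simpa using congrArg σb h
      exact (mul_eq_zero.mp h2).resolve_left ha'
    · intro hy
      exact ⟨⟨(q:ℤ), mem_nonZeroDivisors_of_ne_zero hqZ⟩, hqN y hy⟩
  have hTq : ∀ t : T', q • t = 0 := by
    intro t
    apply Subtype.ext
    show q • (t : N) = 0
    rw [← natCast_zsmul]
    exact hqN t.1 t.2
  -- splitting N ≃ ℤ × T'
  let sξ : ℤ →ₗ[ℤ] N := LinearMap.toSpanSingleton ℤ N ξ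
  let π : N →ₗ[ℤ] T' := LinearMap.codRestrict T' (LinearMap.id - sξ.comp σb)
    (fun y => by
      simp only [hT', LinearMap.mem_ker, LinearMap.sub_apply, LinearMap.id_apply,
        LinearMap.comp_apply, map_sub]
      rw [show sξ (σb y) = σb y • ξ from rfl, map_smul, hσξ, smul_eq_mul, mul_one, sub_self])
  let f : N →ₗ[ℤ] ℤ × T' := LinearMap.prod σb π
  let g : (ℤ × T') →ₗ[ℤ] N := LinearMap.coprod sξ T'.subtype
  have hfg : f.comp g = LinearMap.id := by
    apply LinearMap.ext
    rintro ⟨n, t⟩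
    have ht : σb t.1 = 0 := t.2
    have hg : g (n, t) = n • ξ + t.1 := rfl
    apply Prod.ext
    · show σb (g (n, t)) = n
      rw [hg, map_add, map_smul, hσξ, ht, smul_eq_mul, mul_one, add_zero]
    · apply Subtype.ext
      show g (n, t) - sξ (σb (g (n, t))) = t.1
      rw [hg, map_add, map_smul, hσξ, ht, smul_eq_mul, mul_one, add_zero]
      show n • ξ + t.1 - n • ξ = t.1
      abel
  have hgf : g.comp f = LinearMap.id := by
    apply LinearMap.ext
    intro y
    show σb y • ξ + (y - sξ (σb y)) = y
    show σb y • ξ + (y - σb y • ξ) = y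
    abel
  let e3 : N ≃ₗ[ℤ] ℤ × T' := LinearEquiv.ofLinear f g hfg hgf
  -- finiteness of T'
  have hNfin : Module.Finite ℤ N := Module.Finite.quotient ℤ R
  have hT'fg : Module.Finite ℤ T' := Module.Finite.iff_fg.mpr (IsNoetherian.noetherian T')
  have hT'fin : Finite T' := Module.finite_of_fg_torsion _ (fun t =>
    ⟨⟨(q:ℤ), mem_nonZeroDivisors_of_ne_zero hqZ⟩, by
      rw [Submonoid.smul_def, natCast_zsmul]
      exact hTq t⟩)
  -- the linear functional attached to a coloring
  let toL : (V → ZMod q) → ((V → ℤ) →ₗ[ℤ] ZMod q) := fun c =>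
    { toFun := fun x => ∑ v, x v • c v
      map_add' := fun x y => by
        simp [add_smul, Finset.sum_add_distrib]
      map_smul' := fun a x => by
        simp [Finset.smul_sum, mul_smul] }
  have htoL_single : ∀ (c : V → ZMod q) (v : V), toL c (Pi.single v 1) = c v := by
    intro c v
    simp only [toL, LinearMap.coe_mk, AddHom.coe_mk]
    simp [Pi.single_apply, ite_smul]
  have hcolval : ∀ (c : V → ZMod q) e, toL c (fun v => A v e)
      = (ℓ e : ZMod q) * (c (ends e).1 - c (ends e).2) := by
    intro c e
    rw [hcol e, map_smul, map_sub, htoL_single, htoL_single, zsmul_eq_mul]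
    push_cast
    ring
  have hSmem : ∀ c : V → ZMod q,
      (∀ e, (ℓ e : ZMod q) * c (ends e).1 = (ℓ e : ZMod q) * c (ends e).2)
        ↔ R ≤ LinearMap.ker (toL c) := by
    intro c
    constructor
    · intro hc
      rintro y ⟨x, rfl⟩
      rw [LinearMap.mem_ker, hmv, map_sum]
      refine Finset.sum_eq_zero fun e _ => ?_
      rw [map_smul, hcolval, mul_sub, sub_eq_zero.mpr (hc e), smul_zero]
    · intro hc e
      have h0 := hc (hcolR e)
      rw [LinearMap.mem_ker, hcolval, mul_sub] at h0
      exact sub_eq_zero.mp h0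
  let eS : {c : V → ZMod q //
        ∀ e, (ℓ e : ZMod q) * c (ends e).1 = (ℓ e : ZMod q) * c (ends e).2}
      ≃ (N →ₗ[ℤ] ZMod q) :=
    { toFun := fun c => R.liftQ (toL c.1) ((hSmem c.1).mp c.2)
      invFun := fun ψ => ⟨fun v => ψ (Submodule.Quotient.mk (Pi.single v 1)), by
        intro e
        have h0 : ψ (Submodule.Quotient.mk (fun v => A v e)) = 0 := by
          rw [(Submodule.Quotient.mk_eq_zero R).mpr (hcolR e), map_zero]
        rw [hcol e] at h0
        rw [Submodule.Quotient.mk_smul, Submodule.Quotient.mk_sub] at h0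
        rw [map_smul, map_sub, zsmul_eq_mul] at h0
        push_cast at h0
        rw [mul_sub] at h0
        exact sub_eq_zero.mp h0⟩
      left_inv := fun c => Subtype.ext (funext fun v => by
        show R.liftQ (toL c.1) _ (Submodule.Quotient.mk (Pi.single v 1)) = c.1 v
        rw [Submodule.liftQ_apply, htoL_single])
      right_inv := fun ψ => by
        apply LinearMap.ext
        intro y
        obtain ⟨x, rfl⟩ := Submodule.Quotient.mk_surjective R y
        rw [Submodule.liftQ_apply]
        show (∑ v, x v • ψ (Submodule.Quotient.mk (Pi.single v 1)))
          = ψ (Submodule.Quotient.mk x)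
        have hx : (∑ v, x v • Pi.single v (1:ℤ)) = x := by
          funext w
          simp [Pi.single_apply, Finset.sum_ite_eq]
        calc (∑ v, x v • ψ (Submodule.Quotient.mk (Pi.single v 1)))
            = ψ (∑ v, x v • Submodule.Quotient.mk (Pi.single v 1)) := by
              rw [map_sum]
              simp only [map_smul]
          _ = ψ (Submodule.Quotient.mk x) := by
              congr 1
              have h1 : (∑ v, x v • Submodule.Quotient.mk (Pi.single v (1:ℤ)) : N)
                  = R.mkQ (∑ v, x v • Pi.single v (1:ℤ)) := by
                rw [map_sum]
                simp only [map_smul, Submodule.mkQ_apply]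
              rw [h1, hx, Submodule.mkQ_apply] }
  have : NeZero q := ⟨hq.ne'⟩
  have hcardT : Nat.card (T' →ₗ[ℤ] ZMod q) = Nat.card T' :=
    card_intLinearMap_zmod q T' hTq
  calc Nat.card {c : V → ZMod q //
        ∀ e, (ℓ e : ZMod q) * c (ends e).1 = (ℓ e : ZMod q) * c (ends e).2}
      = Nat.card (N →ₗ[ℤ] ZMod q) := Nat.card_congr eS
    _ = Nat.card ((ℤ × T') →ₗ[ℤ] ZMod q) :=
        Nat.card_congr (LinearEquiv.arrowCongr e3 (LinearEquiv.refl ℤ (ZMod q))).toEquiv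
    _ = Nat.card ((ℤ →ₗ[ℤ] ZMod q) × (T' →ₗ[ℤ] ZMod q)) :=
        Nat.card_congr (LinearMap.coprodEquiv ℤ).symm.toEquiv
    _ = Nat.card (ℤ →ₗ[ℤ] ZMod q) * Nat.card (T' →ₗ[ℤ] ZMod q) := Nat.card_prod _ _
    _ = q * Nat.card T' := by
        rw [Nat.card_congr (LinearMap.ringLmapEquivSelf ℤ ℤ (ZMod q)).toEquiv,
          Nat.card_zmod, hcardT]
    _ = q * Nat.card (Submodule.torsion ℤ N) := by rw [htors]
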